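/- Let M be a non-trivial complete lattice, S a non-empty set, and A, B bounded subposets of M^S. Let P : A → M^S and T : B → M^S be order-preserving maps such that P(a) ≤ b iff a ≤ T(b) for all a ∈ A, b ∈ B. Define R_T = {(s,t) ∈ S×S : ∀b ∈ B, T(b)(s) ≤ b(t)} and R^P = {(s,t) ∈ S×S : ∀a ∈ A, a(s) ≤ P(a)(t)}. If P(A) ⊆ B, then R_T ⊆ R^P. -/
import Mathlib

/-- Given a Galois pair P : A → M^S, T : B → M^S of order-preserving
maps, if P(A) ⊆ B then the upper T-induced relation R_T is contained in the lower
P-induced relation R^P. -/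
theorem stmt4 {M S : Type*} [CompleteLattice M] (hM : (⊥ : M) ≠ ⊤) [Nonempty S]
    (A B : Set (S → M))
    (hA0 : (fun _ => (⊥ : M)) ∈ A) (hA1 : (fun _ => (⊤ : M)) ∈ A)
    (hB0 : (fun _ => (⊥ : M)) ∈ B) (hB1 : (fun _ => (⊤ : M)) ∈ B)
    (P T : (S → M) → (S → M))
    (hP : ∀ a ∈ A, ∀ a' ∈ A, a ≤ a' → P a ≤ P a')
    (hT : ∀ b ∈ B, ∀ b' ∈ B, b ≤ b' → T b ≤ T b')
    (galois : ∀ a ∈ A, ∀ b ∈ B, (P a ≤ b ↔ a ≤ T b))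
    (hPA : ∀ a ∈ A, P a ∈ B) :
    {p : S × S | ∀ b ∈ B, T b p.1 ≤ b p.2} ⊆
      {p : S × S | ∀ a ∈ A, a p.1 ≤ P a p.2} := by
  intro p hp a ha
  have hb := hPA a ha
  have h1 : a ≤ T (P a) := (galois a ha (P a) hb).mp le_rfl
  exact le_trans (h1 p.1) (hp (P a) hb)
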